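/- If f : Powerset(S) → ℝ is submodular with f(∅) = 0, then its Lovász extension f_lv is a convex function on [0,1]^|S|. -/

import Mathlib

open Finset MeasureTheory

namespace LovaszAux

variable {m : ℕ}

/-- The chain of initial segments of a permutation. -/
def chain (τ : Equiv.Perm (Fin m)) (k : ℕ) : Finset (Fin m) :=
  Finset.univ.filter fun i => (τ.symm i : ℕ) < k

lemma mem_chain {τ : Equiv.Perm (Fin m)} {k : ℕ} {i : Fin m} :
    i ∈ chain τ k ↔ (τ.symm i : ℕ) < k := by simp [chain]

lemma chain_zero (τ : Equiv.Perm (Fin m)) : chain τ 0 = ∅ := by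
  ext i; simp [mem_chain]

lemma chain_top (τ : Equiv.Perm (Fin m)) : chain τ m = Finset.univ := by
  ext i; simp [mem_chain, (τ.symm i).isLt]

lemma chain_mono (τ : Equiv.Perm (Fin m)) (k : ℕ) : chain τ k ⊆ chain τ (k + 1) := by
  intro i hi; rw [mem_chain] at *; omega

lemma chain_succ (τ : Equiv.Perm (Fin m)) {k : ℕ} (hk : k < m) :
    chain τ (k + 1) = insert (τ ⟨k, hk⟩) (chain τ k) := by
  ext i
  simp only [mem_chain, Finset.mem_insert]
  constructor
  · intro h
    rcases Nat.lt_succ_iff_lt_or_eq.mp h with h | h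
    · exact Or.inr h
    · left
      have : τ.symm i = ⟨k, hk⟩ := Fin.ext h
      rw [← this, Equiv.apply_symm_apply]
  · rintro (rfl | h)
    · simp
    · omega

lemma not_mem_chain_self (τ : Equiv.Perm (Fin m)) {k : ℕ} (hk : k < m) :
    τ ⟨k, hk⟩ ∉ chain τ k := by
  rw [mem_chain]; simp

/-- Coordinates along a permutation, extended to `ℕ`. -/
noncomputable def coord (τ : Equiv.Perm (Fin m)) (x : Fin m → ℝ) (k : ℕ) : ℝ :=
  if h : k < m then x (τ ⟨k, h⟩) else 0

/-- The step function whose integral over `[0,1]` is the greedy linear functional. -/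
noncomputable def G (f : Finset (Fin m) → ℝ) (τ : Equiv.Perm (Fin m)) (x : Fin m → ℝ)
    (t : ℝ) : ℝ :=
  ∑ k ∈ Finset.range m,
    (f (chain τ (k + 1)) - f (chain τ k)) * (if t ≤ coord τ x k then 1 else 0)

/-- Submodularity gives the greedy upper bound pointwise in `t`. -/
lemma G_le (f : Finset (Fin m) → ℝ)
    (hf : ∀ A B : Finset (Fin m), f (A ∩ B) + f (A ∪ B) ≤ f A + f B)
    (h0 : f ∅ = 0) (τ : Equiv.Perm (Fin m)) (x : Fin m → ℝ) (t : ℝ) :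
    G f τ x t ≤ f (Finset.univ.filter fun i => t ≤ x i) := by
  set A := Finset.univ.filter fun i => t ≤ x i with hA
  have key : ∀ k ∈ Finset.range m,
      (f (chain τ (k + 1)) - f (chain τ k)) * (if t ≤ coord τ x k then 1 else 0)
        ≤ f (A ∩ chain τ (k + 1)) - f (A ∩ chain τ k) := by
    intro k hk
    rw [Finset.mem_range] at hk
    have hc : coord τ x k = x (τ ⟨k, hk⟩) := dif_pos hk
    by_cases hmem : t ≤ x (τ ⟨k, hk⟩)
    · rw [hc, if_pos hmem, mul_one]
      have hA1 : τ ⟨k, hk⟩ ∈ A := by simp [hA, hmem]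
      have hint : (A ∩ chain τ (k + 1)) ∩ chain τ k = A ∩ chain τ k := by
        rw [Finset.inter_assoc, Finset.inter_eq_right.mpr (chain_mono τ k)]
      have huni : (A ∩ chain τ (k + 1)) ∪ chain τ k = chain τ (k + 1) := by
        ext i
        simp only [Finset.mem_union, Finset.mem_inter, chain_succ τ hk, Finset.mem_insert]
        constructor
        · rintro (⟨_, hi⟩ | hi)
          · exact hi
          · exact Or.inr hi
        · rintro (rfl | hi)
          · exact Or.inl ⟨hA1, Or.inl rfl⟩
          · exact Or.inr hi
      have := hf (A ∩ chain τ (k + 1)) (chain τ k)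
      rw [hint, huni] at this
      linarith
    · rw [hc, if_neg hmem, mul_zero]
      have hA2 : τ ⟨k, hk⟩ ∉ A := by simp [hA, hmem]
      have : A ∩ chain τ (k + 1) = A ∩ chain τ k := by
        ext i
        simp only [Finset.mem_inter, chain_succ τ hk, Finset.mem_insert]
        constructor
        · rintro ⟨hiA, rfl | hi⟩
          · exact absurd hiA hA2
          · exact ⟨hiA, hi⟩
        · rintro ⟨hiA, hi⟩
          exact ⟨hiA, Or.inr hi⟩
      rw [this]
      linarith
  calc G f τ x t ≤ ∑ k ∈ Finset.range m,
        (f (A ∩ chain τ (k + 1)) - f (A ∩ chain τ k)) := Finset.sum_le_sum key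
    _ = f (A ∩ chain τ m) - f (A ∩ chain τ 0) :=
        Finset.sum_range_sub (fun k => f (A ∩ chain τ k)) m
    _ = f A := by
        rw [chain_top, chain_zero, Finset.inter_univ, Finset.inter_empty, h0, sub_zero]

lemma downset_eq_range (s : Finset ℕ) (hs : ∀ j ∈ s, ∀ i, i ≤ j → i ∈ s) :
    s = Finset.range s.card := by
  apply Finset.Subset.antisymm
  · intro j hj
    rw [Finset.mem_range]
    by_contra h
    push_neg at h
    have hsub : Finset.range (j + 1) ⊆ s := fun i hi =>
      hs j hj i (Nat.lt_succ_iff.mp (Finset.mem_range.mp hi))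
    have := Finset.card_le_card hsub
    rw [Finset.card_range] at this
    omega
  · intro i hi
    rw [Finset.mem_range] at hi
    by_contra h
    have hsub : s ⊆ Finset.range i := by
      intro j hj
      rw [Finset.mem_range]
      by_contra hj2
      exact h (hs j hj i (by omega))
    have := Finset.card_le_card hsub
    rw [Finset.card_range] at this
    omega

/-- For a sorting permutation, the step function equals the level-set integrand. -/
lemma G_eq (f : Finset (Fin m) → ℝ) (h0 : f ∅ = 0) (τ : Equiv.Perm (Fin m))
    (x : Fin m → ℝ) (hsort : ∀ j k : Fin m, j ≤ k → x (τ k) ≤ x (τ j)) (t : ℝ) :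
    G f τ x t = f (Finset.univ.filter fun i => t ≤ x i) := by
  set s := (Finset.range m).filter (fun k => t ≤ coord τ x k) with hs
  have hdown : ∀ j ∈ s, ∀ i, i ≤ j → i ∈ s := by
    intro j hj i hij
    rw [hs, Finset.mem_filter, Finset.mem_range] at hj ⊢
    obtain ⟨hjm, hjt⟩ := hj
    have him : i < m := lt_of_le_of_lt hij hjm
    refine ⟨him, ?_⟩
    have : x (τ ⟨j, hjm⟩) ≤ x (τ ⟨i, him⟩) := hsort ⟨i, him⟩ ⟨j, hjm⟩ hij
    rw [coord, dif_pos hjm] at hjt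
    rw [coord, dif_pos him]
    linarith
  have hrange : s = Finset.range s.card := downset_eq_range s hdown
  have hcard_le : s.card ≤ m := by
    have := Finset.card_le_card (Finset.filter_subset (fun k => t ≤ coord τ x k)
      (Finset.range m))
    rwa [Finset.card_range] at this
  have hAeq : (Finset.univ.filter fun i => t ≤ x i) = chain τ s.card := by
    ext i
    rw [Finset.mem_filter, mem_chain]
    have hm : ((τ.symm i : ℕ)) < m := (τ.symm i).isLt
    have hcoord : coord τ x (τ.symm i : ℕ) = x i := by
      rw [coord, dif_pos hm]
      congr 1
      rw [Fin.eta]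
      exact τ.apply_symm_apply i
    constructor
    · rintro ⟨-, ht⟩
      have : ((τ.symm i : ℕ)) ∈ s := by
        rw [hs, Finset.mem_filter, Finset.mem_range, hcoord]
        exact ⟨hm, ht⟩
      rw [hrange, Finset.mem_range] at this
      exact this
    · intro h
      have : ((τ.symm i : ℕ)) ∈ s := by
        rw [hrange, Finset.mem_range]; exact h
      rw [hs, Finset.mem_filter, hcoord] at this
      exact ⟨Finset.mem_univ i, this.2⟩
  rw [hAeq]
  have : G f τ x t = ∑ k ∈ s, (f (chain τ (k + 1)) - f (chain τ k)) := by
    rw [hs, Finset.sum_filter, G]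
    apply Finset.sum_congr rfl
    intro k _
    split_ifs <;> simp
  rw [this, hrange, Finset.sum_range_sub (fun k => f (chain τ k)), chain_zero, h0, sub_zero,
    Finset.card_range]

lemma intervalIntegrable_ind (a : ℝ) :
    IntervalIntegrable (fun t => if t ≤ a then (1 : ℝ) else 0) volume 0 1 := by
  apply Antitone.intervalIntegrable
  intro u v huv
  dsimp only
  split_ifs with h1 h2
  · exact le_refl _
  · exact absurd (huv.trans h1) h2
  · norm_num
  · exact le_refl _

lemma integral_ind {a : ℝ} (ha0 : 0 ≤ a) (ha1 : a ≤ 1) :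
    ∫ t in (0 : ℝ)..1, (if t ≤ a then (1 : ℝ) else 0) = a := by
  have hfun : (fun t : ℝ => if t ≤ a then (1 : ℝ) else 0)
      = Set.indicator (Set.Iic a) (fun _ => (1 : ℝ)) := by
    funext t
    simp [Set.indicator_apply, Set.mem_Iic]
  rw [intervalIntegral.integral_of_le (by norm_num : (0:ℝ) ≤ 1)]
  rw [hfun, MeasureTheory.setIntegral_indicator measurableSet_Iic]
  have : Set.Ioc (0:ℝ) 1 ∩ Set.Iic a = Set.Ioc 0 a := by
    ext t
    simp only [Set.mem_inter_iff, Set.mem_Ioc, Set.mem_Iic]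
    constructor
    · rintro ⟨⟨h1, _⟩, h3⟩
      exact ⟨h1, h3⟩
    · rintro ⟨h1, h2⟩
      exact ⟨⟨h1, h2.trans ha1⟩, h2⟩
  rw [this]
  simp [Real.volume_Ioc, ENNReal.toReal_ofReal ha0, ha0]

lemma G_intervalIntegrable (f : Finset (Fin m) → ℝ) (τ : Equiv.Perm (Fin m))
    (x : Fin m → ℝ) : IntervalIntegrable (G f τ x) volume 0 1 := by
  have : G f τ x = ∑ k ∈ Finset.range m,
      (fun t => (f (chain τ (k + 1)) - f (chain τ k)) * (if t ≤ coord τ x k then 1 else 0)) := by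
    funext t
    simp [G, Finset.sum_apply]
  rw [this]
  exact IntervalIntegrable.sum _ fun k _ =>
    (intervalIntegrable_ind (coord τ x k)).const_mul _

lemma coord_mem {τ : Equiv.Perm (Fin m)} {x : Fin m → ℝ}
    (hx : ∀ i, x i ∈ Set.Icc (0:ℝ) 1) {k : ℕ} (hk : k < m) :
    0 ≤ coord τ x k ∧ coord τ x k ≤ 1 := by
  rw [coord, dif_pos hk]
  exact ⟨(hx _).1, (hx _).2⟩

lemma integral_G (f : Finset (Fin m) → ℝ) (τ : Equiv.Perm (Fin m)) (x : Fin m → ℝ)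
    (hx : ∀ i, x i ∈ Set.Icc (0:ℝ) 1) :
    ∫ t in (0 : ℝ)..1, G f τ x t
      = ∑ k ∈ Finset.range m, (f (chain τ (k + 1)) - f (chain τ k)) * coord τ x k := by
  rw [show (fun t => G f τ x t) = fun t => ∑ k ∈ Finset.range m,
      (f (chain τ (k + 1)) - f (chain τ k)) * (if t ≤ coord τ x k then 1 else 0) from rfl]
  rw [intervalIntegral.integral_finset_sum]
  · apply Finset.sum_congr rfl
    intro k hk
    rw [Finset.mem_range] at hk
    rw [intervalIntegral.integral_const_mul,
      integral_ind (coord_mem hx hk).1 (coord_mem hx hk).2]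
  · intro k _
    exact (intervalIntegrable_ind (coord τ x k)).const_mul _

lemma exists_sorting (x : Fin m → ℝ) :
    ∃ τ : Equiv.Perm (Fin m), ∀ j k : Fin m, j ≤ k → x (τ k) ≤ x (τ j) := by
  refine ⟨Tuple.sort (fun i => -x i), fun j k hjk => ?_⟩
  have := Tuple.monotone_sort (fun i => -x i) hjk
  simpa using this

end LovaszAux

/-- The Lovász extension of a set function, via the threshold (level-set) formula,
which agrees with the greedy sorting formula for `x ∈ [0,1]^m` when `f ∅ = 0`. -/
noncomputable def lovasz {m : ℕ} (f : Finset (Fin m) → ℝ) (x : Fin m → ℝ) : ℝ :=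
  ∫ t in (0:ℝ)..1, f (Finset.univ.filter fun i => t ≤ x i)

theorem lovasz_convexOn_of_submodular {m : ℕ} (f : Finset (Fin m) → ℝ)
    (hf : ∀ A B : Finset (Fin m), f (A ∩ B) + f (A ∪ B) ≤ f A + f B)
    (h0 : f ∅ = 0) :
    ConvexOn ℝ {x : Fin m → ℝ | ∀ i, x i ∈ Set.Icc (0:ℝ) 1} (lovasz f) := by
  classical
  open LovaszAux in
  constructor
  · intro x hx y hy a b ha hb hab i
    have hxi := hx i
    have hyi := hy i
    simp only [Set.mem_Icc] at hxi hyi ⊢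
    constructor
    · have : (a • x + b • y) i = a * x i + b * y i := by simp [smul_eq_mul]
      rw [this]
      nlinarith [hxi.1, hyi.1]
    · have : (a • x + b • y) i = a * x i + b * y i := by simp [smul_eq_mul]
      rw [this]
      nlinarith [hxi.2, hyi.2]
  · intro x hx y hy a b ha hb hab
    simp only [Set.mem_setOf_eq] at hx hy
    set z := a • x + b • y with hz
    have hzmem : ∀ i, z i ∈ Set.Icc (0:ℝ) 1 := by
      intro i
      have hxi := hx i
      have hyi := hy i
      simp only [Set.mem_Icc] at hxi hyi ⊢
      have : z i = a * x i + b * y i := by simp [hz, smul_eq_mul]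
      rw [this]
      constructor
      · nlinarith [hxi.1, hyi.1]
      · nlinarith [hxi.2, hyi.2]
    obtain ⟨τ, hτ⟩ := LovaszAux.exists_sorting z
    -- the integrand for a box point equals the step function of its own sorting perm
    have integrand_eq : ∀ (w : Fin m → ℝ) (σ : Equiv.Perm (Fin m)),
        (∀ j k : Fin m, j ≤ k → w (σ k) ≤ w (σ j)) →
        (fun t => f (Finset.univ.filter fun i => t ≤ w i)) = LovaszAux.G f σ w :=
      fun w σ hσ => funext fun t => (LovaszAux.G_eq f h0 σ w hσ t).symm
    have hlov : ∀ (w : Fin m → ℝ), (∀ i, w i ∈ Set.Icc (0:ℝ) 1) →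
        ∀ σ : Equiv.Perm (Fin m), (∀ j k : Fin m, j ≤ k → w (σ k) ≤ w (σ j)) →
        lovasz f w = ∑ k ∈ Finset.range m,
          (f (LovaszAux.chain σ (k + 1)) - f (LovaszAux.chain σ k))
            * LovaszAux.coord σ w k := by
      intro w hw σ hσ
      rw [lovasz, show (fun t => f (Finset.univ.filter fun i => t ≤ w i))
          = LovaszAux.G f σ w from integrand_eq w σ hσ] at *
      exact LovaszAux.integral_G f σ w hw
    have hzeq := hlov z hzmem τ hτ
    -- greedy lower bound for x and y with the chain of τ
    have hle : ∀ (w : Fin m → ℝ), (∀ i, w i ∈ Set.Icc (0:ℝ) 1) →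
        ∑ k ∈ Finset.range m,
          (f (LovaszAux.chain τ (k + 1)) - f (LovaszAux.chain τ k))
            * LovaszAux.coord τ w k ≤ lovasz f w := by
      intro w hw
      obtain ⟨σ, hσ⟩ := LovaszAux.exists_sorting w
      rw [← LovaszAux.integral_G f τ w hw, lovasz]
      apply intervalIntegral.integral_mono_on (by norm_num : (0:ℝ) ≤ 1)
        (LovaszAux.G_intervalIntegrable f τ w)
      · rw [integrand_eq w σ hσ]
        exact LovaszAux.G_intervalIntegrable f σ w
      · intro t _
        exact LovaszAux.G_le f hf h0 τ w t
    have hcoord : ∀ k ∈ Finset.range m,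
        LovaszAux.coord τ z k
          = a * LovaszAux.coord τ x k + b * LovaszAux.coord τ y k := by
      intro k hk
      rw [Finset.mem_range] at hk
      rw [LovaszAux.coord, LovaszAux.coord, LovaszAux.coord, dif_pos hk, dif_pos hk,
        dif_pos hk]
      simp [hz, smul_eq_mul]
    have hsplit : ∑ k ∈ Finset.range m,
        (f (LovaszAux.chain τ (k + 1)) - f (LovaszAux.chain τ k))
          * LovaszAux.coord τ z k
        = a * (∑ k ∈ Finset.range m,
            (f (LovaszAux.chain τ (k + 1)) - f (LovaszAux.chain τ k))
              * LovaszAux.coord τ x k)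
          + b * (∑ k ∈ Finset.range m,
            (f (LovaszAux.chain τ (k + 1)) - f (LovaszAux.chain τ k))
              * LovaszAux.coord τ y k) := by
      rw [Finset.mul_sum, Finset.mul_sum, ← Finset.sum_add_distrib]
      apply Finset.sum_congr rfl
      intro k hk
      rw [hcoord k hk]
      ring
    have hxle := hle x hx
    have hyle := hle y hy
    have : lovasz f z ≤ a * lovasz f x + b * lovasz f y := by
      rw [hzeq, hsplit]
      have h1 : a * (∑ k ∈ Finset.range m,
          (f (LovaszAux.chain τ (k + 1)) - f (LovaszAux.chain τ k))
            * LovaszAux.coord τ x k) ≤ a * lovasz f x :=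
        mul_le_mul_of_nonneg_left hxle ha
      have h2 : b * (∑ k ∈ Finset.range m,
          (f (LovaszAux.chain τ (k + 1)) - f (LovaszAux.chain τ k))
            * LovaszAux.coord τ y k) ≤ b * lovasz f y :=
        mul_le_mul_of_nonneg_left hyle hb
      linarith
    simpa [smul_eq_mul] using this
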